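/- If K is a simplex (convex hull of affinely independent points), then any two measurements on K are compatible: for measurements (f_i) and (g_j) with effects in E(K) summing to 1_K, there exist effects h_{ij} ∈ E(K) with f_i = Σ_j h_{ij} and g_j = Σ_i h_{ij}. -/

import Mathlib

open Finset

variable {V : Type*} [AddCommGroup V] [Module ℝ V]

/-- The effect algebra `E(K)`: affine functions with values in `[0,1]` on `K`. -/
def effectAlgebra (K : Set V) : Set (V →ᵃ[ℝ] ℝ) :=
  {f | ∀ x ∈ K, f x ∈ Set.Icc (0 : ℝ) 1}

lemma affineMap_sum_apply {ι : Type*} (t : Finset ι) (F : ι → (V →ᵃ[ℝ] ℝ)) (x : V) :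
    (∑ i ∈ t, F i) x = ∑ i ∈ t, F i x := by
  classical
  induction t using Finset.cons_induction with
  | empty => simp
  | cons a t ha ih =>
      rw [Finset.sum_cons, Finset.sum_cons, ← ih]
      simp [AffineMap.coe_add]

/-- Dual affine functionals for an affinely independent family. -/
lemma exists_dual_affine {n : ℕ} (s : Fin n → V) (hs : AffineIndependent ℝ s) :
    ∃ b : Fin n → (V →ᵃ[ℝ] ℝ), ∀ k l, b k (s l) = if k = l then 1 else 0 := by
  classical
  rcases isEmpty_or_nonempty (Fin n) with hE | hNE
  · exact ⟨fun k => (hE.elim k), fun k => (hE.elim k)⟩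
  · obtain ⟨i0⟩ := hNE
    have li : LinearIndependent ℝ (fun j : {x : Fin n // x ≠ i0} => s j -ᵥ s i0) :=
      (affineIndependent_iff_linearIndependent_vsub ℝ s i0).mp hs
    set v : {x : Fin n // x ≠ i0} → V := fun j => s j -ᵥ s i0 with hv
    let B : Module.Basis {x : Fin n // x ≠ i0} ℝ (Submodule.span ℝ (Set.range v)) := Module.Basis.span li
    choose φ hφ using fun j => LinearMap.exists_extend (B.coord j)
    -- affine functionals for j ≠ i0
    let c : {x : Fin n // x ≠ i0} → (V →ᵃ[ℝ] ℝ) := fun j =>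
      { toFun := fun x => φ j (x - s i0)
        linear := φ j
        map_vadd' := by
          intro p w
          simp [add_sub_assoc] }
    have hφv : ∀ j j' : {x : Fin n // x ≠ i0}, φ j (v j') = if j = j' then 1 else 0 := by
      intro j j'
      have hmem : v j' ∈ Submodule.span ℝ (Set.range v) :=
        Submodule.subset_span ⟨j', rfl⟩
      have : φ j ((Submodule.span ℝ (Set.range v)).subtype ⟨v j', hmem⟩) =
          B.coord j ⟨v j', hmem⟩ := by
        rw [← hφ j]; rfl
      have hBj' : B j' = ⟨v j', hmem⟩ := by
        apply Subtype.ext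
        exact congrArg Subtype.val (Module.Basis.span_apply li j')
      rw [Submodule.coe_subtype] at this
      rw [this, ← hBj', Module.Basis.coord_apply, Module.Basis.repr_self, Finsupp.single_apply]
      simp [eq_comm]
    have hc : ∀ (j : {x : Fin n // x ≠ i0}) (l : Fin n),
        c j (s l) = if (j : Fin n) = l then 1 else 0 := by
      intro j l
      by_cases hl : l = i0
      · subst hl
        have : c j (s l) = φ j (s l - s l) := rfl
        rw [this, sub_self, map_zero]
        simp [j.2]
      · have : c j (s l) = φ j (v ⟨l, hl⟩) := rfl
        rw [this, hφv j ⟨l, hl⟩]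
        by_cases hjl : (j : Fin n) = l
        · have hj2 : j = ⟨l, hl⟩ := Subtype.ext hjl
          simp [hjl, hj2]
        · have : j ≠ ⟨l, hl⟩ := fun h => hjl (by rw [h])
          simp [hjl, this]
    refine ⟨fun k => if hk : k = i0 then
        AffineMap.const ℝ V 1 - ∑ j : {x : Fin n // x ≠ i0}, c j else c ⟨k, hk⟩, ?_⟩
    intro k l
    beta_reduce
    by_cases hk : k = i0
    · rw [dif_pos hk]
      have hevalsub : ((AffineMap.const ℝ V (1:ℝ) - ∑ j : {x : Fin n // x ≠ i0}, c j :
            V →ᵃ[ℝ] ℝ)) (s l)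
          = 1 - (∑ j : {x : Fin n // x ≠ i0}, c j) (s l) := rfl
      rw [hevalsub, affineMap_sum_apply]
      simp only [hc]
      by_cases hl : l = i0
      · rw [Finset.sum_eq_zero (fun j _ => if_neg (by rw [hl]; exact j.2))]
        rw [if_pos (hk.trans hl.symm)]; ring
      · rw [Finset.sum_eq_single ⟨l, hl⟩
          (fun j _ hj => if_neg (fun h => hj (Subtype.ext h)))
          (fun h => absurd (Finset.mem_univ _) h)]
        rw [if_pos rfl, if_neg (fun h : k = l => hl (h ▸ hk))]; ring
    · simp only [dif_neg hk]
      exact hc ⟨k, hk⟩ l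

/-- On a simplex, any two measurements are compatible: they admit a joint
measurement with effects in `E(K)`. -/
theorem simplex_all_measurements_compatible
    {n : ℕ} (s : Fin n → V) (hs : AffineIndependent ℝ s)
    (K : Set V) (hK : K = convexHull ℝ (Set.range s))
    {n₁ n₂ : ℕ} (f : Fin n₁ → (V →ᵃ[ℝ] ℝ)) (g : Fin n₂ → (V →ᵃ[ℝ] ℝ))
    (hf : ∀ i, f i ∈ effectAlgebra K) (hg : ∀ j, g j ∈ effectAlgebra K)
    (hfsum : ∀ x ∈ K, ∑ i, f i x = 1) (hgsum : ∀ x ∈ K, ∑ j, g j x = 1) :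
    ∃ h : Fin n₁ → Fin n₂ → (V →ᵃ[ℝ] ℝ),
      (∀ i j, h i j ∈ effectAlgebra K) ∧
      (∀ i, ∀ x ∈ K, f i x = ∑ j, h i j x) ∧
      (∀ j, ∀ x ∈ K, g j x = ∑ i, h i j x) := by
  classical
  obtain ⟨b, hb⟩ := exists_dual_affine s hs
  have hsK : ∀ k, s k ∈ K := by
    intro k; rw [hK]; exact subset_convexHull ℝ _ ⟨k, rfl⟩
  -- barycentric representation of points of K
  have hrep : ∀ x ∈ K, ∃ c : Fin n → ℝ, (∀ k, 0 ≤ c k) ∧ (∑ k, c k = 1) ∧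
      (Finset.univ.affineCombination ℝ s c = x) := by
    intro x hx
    rw [hK, convexHull_range_eq_exists_affineCombination] at hx
    obtain ⟨t, w, hw0, hw1, hx⟩ := hx
    refine ⟨Set.indicator ↑t w, ?_, ?_, ?_⟩
    · intro k
      by_cases hk : k ∈ t
      · simp only [Set.indicator_apply, Finset.mem_coe, if_pos hk]; exact hw0 k hk
      · simp [Set.indicator_apply, hk]
    · rw [← hw1]
      exact Finset.sum_indicator_subset w (Finset.subset_univ t)
    · rw [← Finset.affineCombination_indicator_subset w s (Finset.subset_univ t)]
      exact hx
  -- evaluation of affine maps at such points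
  have heval : ∀ (F : V →ᵃ[ℝ] ℝ) (c : Fin n → ℝ), (∑ k, c k = 1) →
      F (Finset.univ.affineCombination ℝ s c) = ∑ k, c k * F (s k) := by
    intro F c hc
    rw [Finset.univ.map_affineCombination s c hc F,
      Finset.affineCombination_eq_linear_combination Finset.univ (F ∘ s) c hc]
    simp [smul_eq_mul]
  -- b k evaluates to the barycentric coordinate
  have hbval : ∀ (c : Fin n → ℝ), (∑ k, c k = 1) →
      ∀ k, b k (Finset.univ.affineCombination ℝ s c) = c k := by
    intro c hc k
    rw [heval (b k) c hc]
    rw [Finset.sum_eq_single k (fun l _ hl => by rw [hb k l, if_neg (Ne.symm hl), mul_zero])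
      (fun h => absurd (Finset.mem_univ k) h)]
    rw [hb k k, if_pos rfl, mul_one]
  -- evaluation of the candidate joint effects
  have hhval : ∀ (i : Fin n₁) (j : Fin n₂) (c : Fin n → ℝ), (∑ k, c k = 1) →
      (∑ k, (f i (s k) * g j (s k)) • b k) (Finset.univ.affineCombination ℝ s c)
        = ∑ k, f i (s k) * g j (s k) * c k := by
    intro i j c hc
    rw [affineMap_sum_apply]
    refine Finset.sum_congr rfl fun k _ => ?_
    rw [AffineMap.coe_smul, Pi.smul_apply, hbval c hc k, smul_eq_mul]
  refine ⟨fun i j => ∑ k, (f i (s k) * g j (s k)) • b k, ?_, ?_, ?_⟩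
  · -- membership in the effect algebra
    intro i j x hx
    obtain ⟨c, hc0, hc1, rfl⟩ := hrep x hx
    rw [hhval i j c hc1]
    constructor
    · refine Finset.sum_nonneg fun k _ => ?_
      exact mul_nonneg (mul_nonneg (hf i (s k) (hsK k)).1 (hg j (s k) (hsK k)).1) (hc0 k)
    · calc ∑ k, f i (s k) * g j (s k) * c k ≤ ∑ k, c k := by
            refine Finset.sum_le_sum fun k _ => ?_
            have h1 : f i (s k) * g j (s k) ≤ 1 :=
              mul_le_one₀ (hf i (s k) (hsK k)).2 (hg j (s k) (hsK k)).1 (hg j (s k) (hsK k)).2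
            calc f i (s k) * g j (s k) * c k ≤ 1 * c k :=
                  mul_le_mul_of_nonneg_right h1 (hc0 k)
              _ = c k := one_mul _
        _ = 1 := hc1
  · -- row sums
    intro i x hx
    obtain ⟨c, hc0, hc1, rfl⟩ := hrep x hx
    have : ∑ j, (∑ k, (f i (s k) * g j (s k)) • b k) (Finset.univ.affineCombination ℝ s c)
        = ∑ j, ∑ k, f i (s k) * g j (s k) * c k :=
      Finset.sum_congr rfl fun j _ => hhval i j c hc1
    rw [this, Finset.sum_comm, heval (f i) c hc1]
    refine Finset.sum_congr rfl fun k _ => ?_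
    rw [← Finset.sum_mul, ← Finset.mul_sum, hgsum (s k) (hsK k), mul_one, mul_comm]
  · -- column sums
    intro j x hx
    obtain ⟨c, hc0, hc1, rfl⟩ := hrep x hx
    have : ∑ i, (∑ k, (f i (s k) * g j (s k)) • b k) (Finset.univ.affineCombination ℝ s c)
        = ∑ i, ∑ k, f i (s k) * g j (s k) * c k :=
      Finset.sum_congr rfl fun i _ => hhval i j c hc1
    rw [this, Finset.sum_comm, heval (g j) c hc1]
    refine Finset.sum_congr rfl fun k _ => ?_
    rw [← Finset.sum_mul, ← Finset.sum_mul, hfsum (s k) (hsK k)]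
    ring
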